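/- Suppose μ, μ̂, σ : S → ℝ are continuous, σ is strictly positive, c ∈ ℝ, τ > 0 and a ≥ 0. If the inclusions Â_c^+ ⊆ A_c ⊆ Â_c^− hold, then |μ̂(s) − c| ≤ a τ σ(s) for every s ∈ ∂A_c, i.e. sup_{s ∈ ∂A_c} |(μ̂(s) − c)/(τ σ(s))| ≤ a. -/
import Mathlib


noncomputable section

/-- The excursion set `A_c = {s : μ s ≥ c}`. -/
def excursionSet {α : Type*} (μ : α → ℝ) (c : ℝ) : Set α := {s | c ≤ μ s}

/-- The upper CoPE set `Â_c(+a)`. -/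
def copePlus {α : Type*} (μhat σ : α → ℝ) (c τ a : ℝ) : Set α :=
  {s | a ≤ (μhat s - c) / (τ * σ s)}

/-- The lower CoPE set `Â_c(-a)`. -/
def copeMinus {α : Type*} (μhat σ : α → ℝ) (c τ a : ℝ) : Set α :=
  {s | -a ≤ (μhat s - c) / (τ * σ s)}

/-- `sup_{s ∈ B} |f s|`. -/
def supAbsOn {α : Type*} (f : α → ℝ) (B : Set α) : ℝ := sSup ((fun s => |f s|) '' B)

/-- If the CoPE inclusions `Â_c^+ ⊆ A_c ⊆ Â_c^-` hold, then on the boundary `∂A_c` one has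
`|μ̂(s) - c| ≤ a τ σ(s)`, i.e. `sup_{∂A_c} |(μ̂ - c)/(τσ)| ≤ a`. -/
theorem boundary_bound_of_cope_inclusion
    {N : ℕ} (hN : 1 ≤ N) (S : Set (EuclideanSpace ℝ (Fin N))) (hS : IsCompact S)
    (μ μhat σ : S → ℝ) (hμ : Continuous μ) (hμhat : Continuous μhat) (hσc : Continuous σ)
    (hσ : ∀ s, 0 < σ s) (c τ a : ℝ) (hτ : 0 < τ) (ha : 0 ≤ a)
    (hincl : copePlus μhat σ c τ a ⊆ excursionSet μ c ∧
      excursionSet μ c ⊆ copeMinus μhat σ c τ a) :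
    (∀ s ∈ frontier (excursionSet μ c), |μhat s - c| ≤ a * (τ * σ s)) ∧
      supAbsOn (fun s => (μhat s - c) / (τ * σ s)) (frontier (excursionSet μ c)) ≤ a := by

  classical
  set g : S → ℝ := fun s => (μhat s - c) / (τ * σ s) with hg
  have hden : ∀ s : S, 0 < τ * σ s := fun s => mul_pos hτ (hσ s)
  have hgcont : Continuous g := by
    apply Continuous.div (by continuity) (by continuity)
    intro s; exact ne_of_gt (hden s)
  have hclosed : IsClosed (excursionSet μ c) := by
    have : excursionSet μ c = μ ⁻¹' (Set.Ici c) := rfl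
    rw [this]; exact IsClosed.preimage hμ isClosed_Ici
  have hbound : ∀ s ∈ frontier (excursionSet μ c), |g s| ≤ a := by
    intro s hs
    have hsA : s ∈ excursionSet μ c := hclosed.closure_subset hs.1
    have hlo : -a ≤ g s := hincl.2 hsA
    have hhi : g s ≤ a := by
      by_contra h
      push_neg at h
      have hU : IsOpen {x : S | a < g x} := isOpen_lt continuous_const hgcont
      have hscl : s ∈ closure (excursionSet μ c)ᶜ := by
        rw [closure_compl]; exact hs.2
      obtain ⟨x, hx1, hx2⟩ := mem_closure_iff.mp hscl _ hU h
      exact hx2 (hincl.1 (show a ≤ (μhat x - c) / (τ * σ x) from le_of_lt hx1))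
    exact abs_le.mpr ⟨hlo, hhi⟩
  have h1 : ∀ s ∈ frontier (excursionSet μ c), |μhat s - c| ≤ a * (τ * σ s) := by
    intro s hs
    have := hbound s hs
    have habs : |g s| = |μhat s - c| / (τ * σ s) := by
      rw [hg]; simp only
      rw [abs_div, abs_of_pos (hden s)]
    rw [habs] at this
    calc |μhat s - c| = |μhat s - c| / (τ * σ s) * (τ * σ s) := by
          rw [div_mul_cancel₀ _ (ne_of_gt (hden s))]
      _ ≤ a * (τ * σ s) := by
          apply mul_le_mul_of_nonneg_right this (le_of_lt (hden s))
  refine ⟨h1, ?_⟩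
  apply Real.sSup_le _ ha
  rintro x ⟨s, hs, rfl⟩
  exact hbound s hs


end
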